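/- In ℓ²(ℕ), the convex hull B of {0} ∪ {k·e_k : k ∈ ℕ}, where e_k is the k-th unit vector, is a convex, semi-solid, norm-unbounded subset of the positive cone satisfying ⋂_{α>0} αB = {0}. Hence a convex, semi-solid subset of the positive cone with trivial intersection ⋂_{α>0} αB = {0} need not be topologically bounded. -/

import Mathlib

set_option maxHeartbeats 1000000


open Pointwise

namespace Ell2CE

noncomputable abbrev V := lp (fun _ : ℕ => ℝ) 2

noncomputable def f (k : ℕ) : V := (k : ℝ) • lp.single 2 k (1 : ℝ)

def G : Set V := {0} ∪ Set.range f

lemma f_apply (k j : ℕ) : (f k : ℕ → ℝ) j = if j = k then (k : ℝ) else 0 := by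
  simp only [f, lp.coeFn_smul, Pi.smul_apply, lp.single_apply, smul_eq_mul]
  split <;> simp_all [Pi.single_apply]

/-- The superset `S` characterizing elements of the hull. -/
def S : Set V :=
  {x | (∀ k, 0 ≤ (x : ℕ → ℝ) k) ∧ (x : ℕ → ℝ) 0 = 0 ∧
    ∃ s : Finset ℕ, (∀ k ∉ s, (x : ℕ → ℝ) k = 0) ∧
      ∑ k ∈ s, (x : ℕ → ℝ) k / (k : ℝ) ≤ 1}

lemma convex_S : Convex ℝ S := by
  rintro x ⟨hx0, hx00, s₁, hxs, hxsum⟩ y ⟨hy0, hy00, s₂, hys, hysum⟩ a b ha hb hab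
  have hcoord : ∀ j, ((a • x + b • y : V) : ℕ → ℝ) j
      = a * (x : ℕ → ℝ) j + b * (y : ℕ → ℝ) j := by
    intro j
    simp [lp.coeFn_add, lp.coeFn_smul]; rfl
  refine ⟨fun k => by rw [hcoord]; exact add_nonneg (mul_nonneg ha (hx0 k)) (mul_nonneg hb (hy0 k)), by rw [hcoord, hx00, hy00]; ring,
    s₁ ∪ s₂, fun k hk => ?_, ?_⟩
  · rw [hcoord, hxs k (fun h => hk (Finset.mem_union_left _ h)),
      hys k (fun h => hk (Finset.mem_union_right _ h))]
    ring
  · have e1 : ∑ k ∈ s₁ ∪ s₂, (x : ℕ → ℝ) k / (k : ℝ) = ∑ k ∈ s₁, (x : ℕ → ℝ) k / (k : ℝ) :=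
      (Finset.sum_subset Finset.subset_union_left (fun k _ hk => by simp [hxs k hk])).symm
    have e2 : ∑ k ∈ s₁ ∪ s₂, (y : ℕ → ℝ) k / (k : ℝ) = ∑ k ∈ s₂, (y : ℕ → ℝ) k / (k : ℝ) :=
      (Finset.sum_subset Finset.subset_union_right (fun k _ hk => by simp [hys k hk])).symm
    calc ∑ k ∈ s₁ ∪ s₂, ((a • x + b • y : V) : ℕ → ℝ) k / (k : ℝ)
        = a * ∑ k ∈ s₁ ∪ s₂, (x : ℕ → ℝ) k / (k : ℝ)
          + b * ∑ k ∈ s₁ ∪ s₂, (y : ℕ → ℝ) k / (k : ℝ) := by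
          rw [Finset.mul_sum, Finset.mul_sum, ← Finset.sum_add_distrib]
          refine Finset.sum_congr rfl fun k _ => ?_
          rw [hcoord]; ring
      _ ≤ a * 1 + b * 1 := by
          rw [e1, e2]
          exact add_le_add (mul_le_mul_of_nonneg_left hxsum ha)
            (mul_le_mul_of_nonneg_left hysum hb)
      _ = 1 := by linarith

lemma G_subset_S : G ⊆ S := by
  rintro x (rfl | ⟨k, rfl⟩)
  · exact ⟨fun k => le_refl 0, rfl, ∅, fun k _ => rfl, by simp⟩
  · refine ⟨fun j => by rw [f_apply]; split <;> positivity, ?_, {k}, fun j hj => ?_, ?_⟩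
    · rw [f_apply]
      split
      · next h => simp [← h]
      · rfl
    · rw [f_apply, if_neg (by simpa using hj)]
    · rw [Finset.sum_singleton, f_apply, if_pos rfl]
      rcases Nat.eq_zero_or_pos k with h | h
      · simp [h]
      · rw [div_self (by positivity)]

lemma hull_subset_S : convexHull ℝ G ⊆ S := convexHull_min G_subset_S convex_S

/-- Membership lemma: a nonnegative finitely supported vector with weighted sum `≤ 1`
lies in the convex hull. -/
lemma mem_hull (y : V) (hy0 : ∀ k, 0 ≤ (y : ℕ → ℝ) k) (hy00 : (y : ℕ → ℝ) 0 = 0)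
    (s : Finset ℕ) (hsupp : ∀ k ∉ s, (y : ℕ → ℝ) k = 0)
    (hsum : ∑ k ∈ s, (y : ℕ → ℝ) k / (k : ℝ) ≤ 1) : y ∈ convexHull ℝ G := by
  set T : ℝ := ∑ k ∈ s, (y : ℕ → ℝ) k / (k : ℝ) with hT
  set N : ℕ := s.sup id + 1 with hN
  have hNs : N ∉ s := by
    intro h
    have := Finset.le_sup (f := id) h
    simp only [id] at this
    omega
  set w : ℕ → ℝ := fun k => if k = N then 1 - T else (y : ℕ → ℝ) k / (k : ℝ) with hw
  set p : ℕ → V := fun k => if k = N then 0 else f k with hp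
  have hTnn : 0 ≤ T := Finset.sum_nonneg fun k _ => div_nonneg (hy0 k) (Nat.cast_nonneg k)
  have hwnn : ∀ k ∈ insert N s, 0 ≤ w k := by
    intro k hk
    by_cases h : k = N
    · simp [hw, h, hsum]
    · simp only [hw, if_neg h]
      exact div_nonneg (hy0 k) (Nat.cast_nonneg k)
  have hwsum : ∑ k ∈ insert N s, w k = 1 := by
    rw [Finset.sum_insert hNs]
    have : ∑ k ∈ s, w k = T := by
      refine Finset.sum_congr rfl fun k hk => ?_
      rw [hw]
      exact if_neg (fun h => hNs (by rw [← h]; exact hk))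
    rw [this]
    simp [hw]
  have hpG : ∀ k ∈ insert N s, p k ∈ convexHull ℝ G := by
    intro k _
    apply subset_convexHull
    by_cases h : k = N
    · simp [hp, h, G]
    · right; exact ⟨k, by simp [hp, h]⟩
  have key : ∑ k ∈ insert N s, w k • p k = y := by
    rw [Finset.sum_insert hNs]
    have h0 : w N • p N = 0 := by simp [hp]
    rw [h0, zero_add]
    apply lp.ext
    have hco : ⇑(∑ k ∈ s, w k • p k) = ∑ k ∈ s, w k • ⇑(p k) := by
      rw [lp.coeFn_sum]
      exact Finset.sum_congr rfl fun k _ => by rw [lp.coeFn_smul]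
    funext j
    rw [hco, Finset.sum_apply]
    have hterm : ∀ k ∈ s, (w k • ⇑(p k)) j
        = if j = k then ((y : ℕ → ℝ) k / (k : ℝ)) * (k : ℝ) else 0 := by
      intro k hk
      have hkN : k ≠ N := fun h => hNs (h ▸ hk)
      simp only [hp, hw, if_neg hkN, Pi.smul_apply, smul_eq_mul, f_apply]
      split <;> ring
    rw [Finset.sum_congr rfl hterm, Finset.sum_ite_eq s j
      (fun k => ((y : ℕ → ℝ) k / (k : ℝ)) * (k : ℝ))]
    by_cases hj : j ∈ s
    · rw [if_pos hj]
      rcases Nat.eq_zero_or_pos j with h | h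
      · simp [h, hy00]
      · rw [div_mul_cancel₀]
        exact Nat.cast_ne_zero.mpr h.ne'
    · rw [if_neg hj, hsupp j hj]
  rw [← key]
  exact (convex_convexHull ℝ G).sum_mem hwnn hwsum hpG

end Ell2CE

/-- In `ℓ²(ℕ)`, the convex hull `B` of `{0} ∪ {k • e_k : k ∈ ℕ}` is a convex, semi-solid,
norm-unbounded subset of the positive cone with `⋂_{α > 0} α • B = {0}`.  Hence a convex,
semi-solid subset of the positive cone with trivial intersection need not be topologically
bounded. -/
theorem ell2_counterexample :
    ∀ B : Set (lp (fun _ : ℕ => ℝ) 2),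
      B = convexHull ℝ ({0} ∪ Set.range fun k : ℕ => (k : ℝ) • lp.single 2 k (1 : ℝ)) →
      Convex ℝ B ∧
      (∀ x ∈ B, ∀ k : ℕ, 0 ≤ (x : ℕ → ℝ) k) ∧
      (∀ x ∈ B, ∀ y : lp (fun _ : ℕ => ℝ) 2,
        (∀ k : ℕ, 0 ≤ (y : ℕ → ℝ) k) → (∀ k : ℕ, (y : ℕ → ℝ) k ≤ (x : ℕ → ℝ) k) → y ∈ B) ∧
      ¬ Bornology.IsVonNBounded ℝ B ∧
      (⋂ α ∈ Set.Ioi (0 : ℝ), α • B) = {0} := by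
  intro B hB
  have hGeq : ({0} ∪ Set.range fun k : ℕ => (k : ℝ) • lp.single 2 k (1 : ℝ)) = Ell2CE.G := by
    rfl
  rw [hGeq] at hB
  have hBS : B ⊆ Ell2CE.S := hB ▸ Ell2CE.hull_subset_S
  refine ⟨hB ▸ convex_convexHull ℝ _, fun x hx k => (hBS hx).1 k, ?_, ?_, ?_⟩
  · -- semi-solid
    intro x hx y hy0 hyx
    obtain ⟨hx0, hx00, s, hsupp, hsum⟩ := hBS hx
    have hy00 : (y : ℕ → ℝ) 0 = 0 := le_antisymm (hx00 ▸ hyx 0) (hy0 0)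
    have hysupp : ∀ k ∉ s, (y : ℕ → ℝ) k = 0 := fun k hk =>
      le_antisymm ((hsupp k hk) ▸ hyx k) (hy0 k)
    have hysum : ∑ k ∈ s, (y : ℕ → ℝ) k / (k : ℝ) ≤ 1 := by
      refine le_trans (Finset.sum_le_sum fun k _ => ?_) hsum
      rcases Nat.eq_zero_or_pos k with h | h
      · simp [h]
      · exact div_le_div_of_nonneg_right (hyx k) (by positivity) |>.trans_eq rfl
    rw [hB]
    exact Ell2CE.mem_hull y hy0 hy00 s hysupp hysum
  · -- unbounded
    rw [NormedSpace.isVonNBounded_iff, isBounded_iff_forall_norm_le]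
    rintro ⟨C, hC⟩
    obtain ⟨k, hk⟩ := exists_nat_gt C
    have hmem : Ell2CE.f k ∈ B := by
      rw [hB]
      exact subset_convexHull ℝ _ (Or.inr ⟨k, rfl⟩)
    have hnorm : ‖Ell2CE.f k‖ = (k : ℝ) := by
      have hp : (0 : ℝ) < (2 : ENNReal).toReal := by norm_num
      have h1 : ‖(lp.single 2 k (1 : ℝ) : Ell2CE.V)‖ = 1 := by
        simpa using lp.norm_single (E := fun _ : ℕ => ℝ) hp (fun _ => (1 : ℝ)) k
      rw [Ell2CE.f, norm_smul, h1]
      simp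
    have := hC _ hmem
    rw [hnorm] at this
    linarith
  · -- intersection
    ext x
    simp only [Set.mem_iInter, Set.mem_singleton_iff, Set.mem_Ioi]
    constructor
    · intro hx
      have hcoord : ∀ k, (x : ℕ → ℝ) k = 0 := by
        intro k
        have hub : ∀ α : ℝ, 0 < α → (x : ℕ → ℝ) k ≤ α * k := by
          intro α hα
          obtain ⟨b, hbB, hbx⟩ := hx α hα
          obtain ⟨hb0, hb00, s, hsupp, hsum⟩ := hBS hbB
          have hbk : (b : ℕ → ℝ) k ≤ (k : ℝ) := by
            by_cases hk : k ∈ s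
            · rcases Nat.eq_zero_or_pos k with h | h
              · simp [h, hb00]
              · have h1 : (b : ℕ → ℝ) k / (k : ℝ) ≤ 1 :=
                  le_trans (Finset.single_le_sum (f := fun j => (b : ℕ → ℝ) j / (j : ℝ))
                    (fun j _ => div_nonneg (hb0 j) (Nat.cast_nonneg j)) hk) hsum
                calc (b : ℕ → ℝ) k = ((b : ℕ → ℝ) k / (k : ℝ)) * k := by
                      rw [div_mul_cancel₀]; exact Nat.cast_ne_zero.mpr h.ne'
                  _ ≤ 1 * k := mul_le_mul_of_nonneg_right h1 (Nat.cast_nonneg k)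
                  _ = k := one_mul _
            · rw [hsupp k hk]; exact Nat.cast_nonneg k
          have hxk : (x : ℕ → ℝ) k = α * (b : ℕ → ℝ) k := by
            rw [← hbx]
            simp [lp.coeFn_smul]
          rw [hxk]
          exact mul_le_mul_of_nonneg_left hbk (le_of_lt hα)
        have hnn : 0 ≤ (x : ℕ → ℝ) k := by
          obtain ⟨b, hbB, hbx⟩ := hx 1 one_pos
          have := (hBS hbB).1 k
          rw [← hbx]
          simpa [lp.coeFn_smul] using this
        refine le_antisymm ?_ hnn
        by_contra h
        push_neg at h
        have hα : (0 : ℝ) < (x : ℕ → ℝ) k / (2 * (k + 1)) := by positivity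
        have h2 := hub _ hα
        have hk2 : (k : ℝ) < 2 * ((k : ℝ) + 1) := by
          have := Nat.cast_nonneg (α := ℝ) k
          linarith
        have h3 : (x : ℕ → ℝ) k / (2 * ((k : ℝ) + 1)) * k < (x : ℕ → ℝ) k := by
          rw [div_mul_eq_mul_div, div_lt_iff₀ (by positivity)]
          nlinarith
        linarith
      apply lp.ext
      funext k
      simpa using hcoord k
    · rintro rfl α hα
      refine ⟨0, hB ▸ subset_convexHull ℝ _ (Or.inl rfl), smul_zero α⟩
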